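/- Let θ ∈ ℝ with sin θ ≠ 0, set [m] := sin(mθ)/sin θ for m ∈ ℤ and μ(s,t) := [s][t][s−t][s+t]. Let s, t ∈ ℤ be such that [s+t], [s+t+1], [s+t−1], [s−t], [s−t+1], [s−t+2], μ(s,t), μ(s+1,t), μ(s,t−1) and μ(s+1,t−1) are all strictly positive. Define the real 2×2 matrices U := (1/[s+t]) · [[ [s+t+1], √([s+t+1][s+t−1]) ], [ √([s+t+1][s+t−1]), [s+t−1] ]] and B := [[ ([s+t+1]/[s+t])·√(μ(s+1,t−1)/μ(s,t)), (√([s−t][s−t+2])/[s−t+1])·√(μ(s+1,t)·μ(s,t−1))/μ(s,t) ], [ (√([s−t][s−t+2])/[s−t+1])·√(μ(s+1,t)·μ(s,t−1))/μ(s,t), ([s+t−1]/[s+t])·√(μ(s+1,t−1)/μ(s,t)) ]]. Then U·B = [2]·B. -/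

import Mathlib

/-- Trigonometric quantum integer `[m] = sin(mθ)/sin θ`. -/
noncomputable def qit (θ : ℝ) (m : ℤ) : ℝ := Real.sin (m * θ) / Real.sin θ

/-- Frobenius–Perron weight `μ(s,t) = [s][t][s−t][s+t]`. -/
noncomputable def fpw (θ : ℝ) (s t : ℤ) : ℝ :=
  qit θ s * qit θ t * qit θ (s - t) * qit θ (s + t)

/-- The U-cell matrix U^a_{a+ε₁+ε₋₂}. -/
noncomputable def Umat (θ : ℝ) (s t : ℤ) : Matrix (Fin 2) (Fin 2) ℝ :=
  (1 / qit θ (s + t)) •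
    !![qit θ (s + t + 1), Real.sqrt (qit θ (s + t + 1) * qit θ (s + t - 1));
       Real.sqrt (qit θ (s + t + 1) * qit θ (s + t - 1)), qit θ (s + t - 1)]

/-- The B-cell matrix B_{a,_,a+ε₁+ε₋₂,_} (up to normalisation). -/
noncomputable def Bmat (θ : ℝ) (s t : ℤ) : Matrix (Fin 2) (Fin 2) ℝ :=
  !![(qit θ (s + t + 1) / qit θ (s + t)) *
        Real.sqrt (fpw θ (s + 1) (t - 1) / fpw θ s t),
     (Real.sqrt (qit θ (s - t) * qit θ (s - t + 2)) / qit θ (s - t + 1)) *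
        Real.sqrt (fpw θ (s + 1) t * fpw θ s (t - 1)) / fpw θ s t;
     (Real.sqrt (qit θ (s - t) * qit θ (s - t + 2)) / qit θ (s - t + 1)) *
        Real.sqrt (fpw θ (s + 1) t * fpw θ s (t - 1)) / fpw θ s t,
     (qit θ (s + t - 1) / qit θ (s + t)) *
        Real.sqrt (fpw θ (s + 1) (t - 1) / fpw θ s t)]

/-- If two nonnegative reals have equal squares they are equal. -/
private lemma sq_cancel_aux (a b : ℝ) (ha : 0 ≤ a) (hb : 0 ≤ b) (h : a ^ 2 = b ^ 2) :
    a = b := by nlinarith [sq_nonneg (a - b), sq_nonneg (a + b)]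

/-- Generic square-root identity. -/
lemma key_gen (D E F A B P m0 m1 m2 m3 : ℝ)
    (hD : 0 < D) (hE : 0 < E) (hF : 0 < F) (hA : 0 < A) (hB : 0 < B) (hP : 0 < P)
    (hm0 : 0 < m0) (hm1 : 0 < m1) (hm2 : 0 < m2) (hm3 : 0 < m3)
    (hpoly : D * E * (m1 * m2) * P ^ 2 = F ^ 2 * (A * B) * (m3 * m0)) :
    Real.sqrt (D * E) / F * Real.sqrt (m1 * m2) / m0 =
    Real.sqrt (A * B) * Real.sqrt (m3 / m0) / P := by
  apply sq_cancel_aux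
  · positivity
  · positivity
  rw [div_pow, div_pow, mul_pow, mul_pow, div_pow,
    Real.sq_sqrt (by positivity), Real.sq_sqrt (by positivity),
    Real.sq_sqrt (by positivity), Real.sq_sqrt (by positivity)]
  field_simp
  linear_combination hpoly

/-- `[2][n] = [n+1] + [n-1]`. -/
lemma qit_two_mul (θ : ℝ) (hθ : Real.sin θ ≠ 0) (n : ℤ) :
    qit θ 2 * qit θ n = qit θ (n + 1) + qit θ (n - 1) := by
  unfold qit
  push_cast
  have h1 : ((n : ℝ) + 1) * θ = n * θ + θ := by ring
  have h2 : ((n : ℝ) - 1) * θ = n * θ - θ := by ring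
  rw [h1, h2, Real.sin_add, Real.sin_sub, Real.sin_two_mul]
  field_simp
  ring

/-- Polynomial identity underlying the square-root identity. -/
lemma fpw_poly (θ : ℝ) (s t : ℤ) :
    qit θ (s - t) * qit θ (s - t + 2) * (fpw θ (s + 1) t * fpw θ s (t - 1)) *
      (qit θ (s + t)) ^ 2 =
    (qit θ (s - t + 1)) ^ 2 * (qit θ (s + t + 1) * qit θ (s + t - 1)) *
      (fpw θ (s + 1) (t - 1) * fpw θ s t) := by
  unfold fpw
  have e1 : s + 1 - t = s - t + 1 := by ring
  have e2 : s + 1 + t = s + t + 1 := by ring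
  have e3 : s - (t - 1) = s - t + 1 := by ring
  have e4 : s + (t - 1) = s + t - 1 := by ring
  have e5 : s + 1 - (t - 1) = s - t + 2 := by ring
  have e6 : s + 1 + (t - 1) = s + t := by ring
  rw [e1, e2, e3, e4, e5, e6]
  ring

set_option maxHeartbeats 1600000 in
/-- Braid absorption (BA): B is an eigenmatrix of U with eigenvalue [2]. -/
theorem braid_absorption_eps1_epsMinus2 (θ : ℝ) (hθ : Real.sin θ ≠ 0)
    (s t : ℤ)
    (h1 : 0 < qit θ (s + t)) (h2 : 0 < qit θ (s + t + 1))
    (h3 : 0 < qit θ (s + t - 1)) (h4 : 0 < qit θ (s - t))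
    (h5 : 0 < qit θ (s - t + 1)) (h6 : 0 < qit θ (s - t + 2))
    (h7 : 0 < fpw θ s t) (h8 : 0 < fpw θ (s + 1) t)
    (h9 : 0 < fpw θ s (t - 1)) (h10 : 0 < fpw θ (s + 1) (t - 1)) :
    Umat θ s t * Bmat θ s t = qit θ 2 • Bmat θ s t := by
  have hkey :
      (Real.sqrt (qit θ (s - t) * qit θ (s - t + 2)) / qit θ (s - t + 1)) *
          Real.sqrt (fpw θ (s + 1) t * fpw θ s (t - 1)) / fpw θ s t =
      Real.sqrt (qit θ (s + t + 1) * qit θ (s + t - 1)) *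
          Real.sqrt (fpw θ (s + 1) (t - 1) / fpw θ s t) / qit θ (s + t) :=
    key_gen _ _ _ _ _ _ _ _ _ _ h4 h6 h5 h2 h3 h1 h7 h8 h9 h10 (fpw_poly θ s t)
  have h2n : qit θ 2 * qit θ (s + t) = qit θ (s + t + 1) + qit θ (s + t - 1) :=
    qit_two_mul θ hθ (s + t)
  have ha := Real.mul_self_sqrt h2.le
  have hb := Real.mul_self_sqrt h3.le
  have hP : qit θ (s + t) ≠ 0 := ne_of_gt h1
  ext i j
  fin_cases i <;> fin_cases j <;>
    simp only [Umat, Bmat, Matrix.mul_apply, Fin.sum_univ_two, Matrix.smul_apply,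
      Matrix.of_apply, Matrix.cons_val', Matrix.cons_val_zero, Matrix.cons_val_one,
      Matrix.head_cons, Matrix.head_fin_const, Matrix.empty_val',
      Matrix.cons_val_fin_one, smul_eq_mul, Fin.isValue, Fin.zero_eta, Fin.mk_one] <;>
    rw [hkey] <;> field_simp <;>
  [ linear_combination Real.sq_sqrt (mul_pos h2 h3).le - qit θ (s + t + 1) * h2n;
    linear_combination -h2n;
    linear_combination -h2n;
    linear_combination Real.sq_sqrt (mul_pos h2 h3).le - qit θ (s + t - 1) * h2n]
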